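/- sl₂-type lowering isomorphism between opposite-charge Fock sectors: for every integer m ≥ 0, the m-th power ω^m : F_m → F_{−m} is a linear isomorphism. -/

import Mathlib

open scoped BigOperators

noncomputable section

/-- The ring `𝒟 = ℂ[t₁,t₃,t₅,…]`: variable `k : ℕ` stands for `t_{2k+1}`. -/
abbrev Dring : Type := MvPolynomial ℕ ℂ

/-- The series `∑_{k≥1} t_{2k-1} z^{2k-1}/(2k-1)`. -/
def genX : PowerSeries Dring :=
  PowerSeries.mk fun n =>
    if n % 2 = 1 then ((n : ℂ)⁻¹) • (MvPolynomial.X ((n - 1) / 2) : Dring) else 0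

/-- `T n` is the polynomial `T₋ₙ`, the `n`-th coefficient of `exp(genX) = ∑_j genX^j/j!`
(the sum may be truncated at `j = n` since `genX` has zero constant term). -/
def T (n : ℕ) : Dring :=
  ∑ j ∈ Finset.range (n + 1),
    ((j.factorial : ℂ)⁻¹) • (PowerSeries.coeff (R := Dring) n (genX ^ j))

/-- Index of a basis vector of the fermionic Fock space: a pair `(R, S)` of finite
sets of modes; `k ∈ R` stands for the factor `b_{k+1}` and `k ∈ S` for `a_{k+1}`. -/
abbrev FockIdx : Type := Finset ℕ × Finset ℕ

/-- The full fermionic Fock space `⊕_m F_m`, with basis `FockIdx`. -/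
abbrev Fock : Type := FockIdx →₀ ℂ

/-- `𝒟 ⊗ (⊕_m F_m)`, a free `𝒟`-module with basis `FockIdx`. -/
abbrev DFock : Type := FockIdx →₀ Dring

def charge (x : FockIdx) : ℤ := (x.1.card : ℤ) - x.2.card

def fsingle (x : FockIdx) : Fock := Finsupp.single x 1

/-- `αₙ` (for `n = k+1`, `k : ℕ`): wedging with `a_{k+1}` with the Koszul sign `(-1)^{deg ξ}`. -/
def alpha (k : ℕ) : Fock →ₗ[ℂ] Fock :=
  Finsupp.lsum ℂ fun x => LinearMap.toSpanSingleton ℂ Fock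
    (if k ∈ x.2 then 0 else
      (((-1 : ℂ) ^ x.1.card) * ((-1 : ℂ) ^ (x.2.filter (· < k)).card)) •
        fsingle (x.1, insert k x.2))

/-- `βₙ` (for `n = k+1`): contraction with `b_{k+1}*`, with Koszul signs. -/
def beta (k : ℕ) : Fock →ₗ[ℂ] Fock :=
  Finsupp.lsum ℂ fun x => LinearMap.toSpanSingleton ℂ Fock
    (if k ∈ x.1 then ((-1 : ℂ) ^ (x.1.filter (· < k)).card) • fsingle (x.1.erase k, x.2)
     else 0)

/-- `ω = ∑_{n≥1} αₙ βₙ` (on each basis vector only finitely many terms are nonzero). -/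
def omega : Fock →ₗ[ℂ] Fock :=
  Finsupp.lsum ℂ fun x => LinearMap.toSpanSingleton ℂ Fock
    (∑ k ∈ x.1, alpha k (beta k (fsingle x)))

/-- The charge-`m` Fock space `F_m ⊆ Fock`. -/
def FockC (m : ℤ) : Submodule ℂ Fock := Finsupp.supported ℂ ℂ {x | charge x = m}

def dsingle (x : FockIdx) : DFock := Finsupp.single x 1

/-- `αₙ`, extended `𝒟`-linearly to `𝒟 ⊗ Fock`. -/
def dAlpha (k : ℕ) : DFock →ₗ[Dring] DFock :=
  Finsupp.lsum Dring fun x => LinearMap.toSpanSingleton Dring DFock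
    (if k ∈ x.2 then 0 else
      (((-1 : Dring) ^ x.1.card) * ((-1 : Dring) ^ (x.2.filter (· < k)).card)) •
        dsingle (x.1, insert k x.2))

/-- `βₙ`, extended `𝒟`-linearly to `𝒟 ⊗ Fock`. -/
def dBeta (k : ℕ) : DFock →ₗ[Dring] DFock :=
  Finsupp.lsum Dring fun x => LinearMap.toSpanSingleton Dring DFock
    (if k ∈ x.1 then ((-1 : Dring) ^ (x.1.filter (· < k)).card) • dsingle (x.1.erase k, x.2)
     else 0)

/-- `d = ∑_{n≥1} T₋₍₂ₙ₋₁₎ βₙ : 𝒟⊗F_m → 𝒟⊗F_{m-1}`. -/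
def dOp : DFock →ₗ[Dring] DFock :=
  Finsupp.lsum Dring fun x => LinearMap.toSpanSingleton Dring DFock
    (∑ k ∈ x.1, T (2 * k + 1) • dBeta k (dsingle x))

/-- `ω = ∑_{n≥1} αₙ βₙ`, extended `𝒟`-linearly. -/
def dOmega : DFock →ₗ[Dring] DFock :=
  Finsupp.lsum Dring fun x => LinearMap.toSpanSingleton Dring DFock
    (∑ k ∈ x.1, dAlpha k (dBeta k (dsingle x)))

/-- The charge-`m` part `𝒟 ⊗ F_m`, as a `𝒟`-submodule. -/
def DFockC (m : ℤ) : Submodule Dring DFock := Finsupp.supported Dring Dring {x | charge x = m}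


section Part1

open Finset

lemma npow_parity (a b : ℕ) (h : a % 2 = b % 2) : (-1:ℂ)^a = (-1:ℂ)^b := by
  rw [← Nat.div_add_mod a 2, ← Nat.div_add_mod b 2, h, pow_add, pow_add, pow_mul, pow_mul]
  norm_num

def wsgn (x : FockIdx) (k : ℕ) : ℂ :=
  (-1 : ℂ) ^ ((x.1.filter (· < k)).card + ((x.2.filter (· < k)).card + (x.1.erase k).card))

def ssgn (x : FockIdx) (k : ℕ) : ℂ :=
  (-1 : ℂ) ^ ((x.1.filter (· < k)).card + ((x.2.filter (· < k)).card + x.1.card))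

noncomputable def sigma : Fock →ₗ[ℂ] Fock :=
  Finsupp.lsum ℂ fun x => LinearMap.toSpanSingleton ℂ Fock
    (∑ k ∈ x.2 \ x.1, ssgn x k • fsingle (insert k x.1, x.2.erase k))

lemma beta_single (k : ℕ) (x : FockIdx) :
    beta k (fsingle x) =
      if k ∈ x.1 then ((-1 : ℂ) ^ (x.1.filter (· < k)).card) • fsingle (x.1.erase k, x.2)
      else 0 := by
  rw [beta, fsingle, Finsupp.lsum_single, LinearMap.toSpanSingleton_apply_one]

lemma alpha_single (k : ℕ) (x : FockIdx) :
    alpha k (fsingle x) =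
      if k ∈ x.2 then 0 else
        (((-1 : ℂ) ^ x.1.card) * ((-1 : ℂ) ^ (x.2.filter (· < k)).card)) •
          fsingle (x.1, insert k x.2) := by
  rw [alpha, fsingle, Finsupp.lsum_single, LinearMap.toSpanSingleton_apply_one]

lemma sigma_single (x : FockIdx) :
    sigma (fsingle x) = ∑ k ∈ x.2 \ x.1, ssgn x k • fsingle (insert k x.1, x.2.erase k) := by
  rw [sigma, fsingle, Finsupp.lsum_single, LinearMap.toSpanSingleton_apply_one]

lemma omega_single (x : FockIdx) :
    omega (fsingle x) = ∑ k ∈ x.1 \ x.2, wsgn x k • fsingle (x.1.erase k, insert k x.2) := by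
  rw [omega, fsingle, Finsupp.lsum_single, LinearMap.toSpanSingleton_apply_one,
    Finset.sdiff_eq_filter, Finset.sum_filter]
  refine Finset.sum_congr rfl fun k hk => ?_
  rw [beta_single, if_pos hk, map_smul, alpha_single]
  by_cases h2 : k ∈ x.2
  · rw [if_pos h2, smul_zero, if_neg (not_not_intro h2)]
  · rw [if_neg h2, if_pos h2, smul_smul, wsgn]
    congr 1
    rw [pow_add, pow_add]
    ring

end Part1
section Part2
open Finset

lemma filt_erase_card {s : Finset ℕ} {l : ℕ} (k : ℕ) (hl : l ∈ s) :
    ((s.erase l).filter (· < k)).card + (if l < k then 1 else 0) = (s.filter (· < k)).card := by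
  rw [Finset.filter_erase]
  by_cases h : l < k
  · rw [if_pos h]; exact Finset.card_erase_add_one (Finset.mem_filter.mpr ⟨hl, h⟩)
  · rw [if_neg h, add_zero, Finset.erase_eq_of_notMem (a := l) (s := s.filter (· < k)) (fun hc => h (Finset.mem_filter.mp hc).2)]

lemma filt_insert_card {s : Finset ℕ} {l : ℕ} (k : ℕ) (hl : l ∉ s) :
    ((insert l s).filter (· < k)).card = (s.filter (· < k)).card + (if l < k then 1 else 0) := by
  rw [Finset.filter_insert]
  by_cases h : l < k
  · rw [if_pos h, if_pos h, Finset.card_insert_of_notMem (fun hc => hl (Finset.mem_filter.mp hc).1)]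
  · rw [if_neg h, if_neg h, add_zero]

lemma diagW {R S : Finset ℕ} {l : ℕ} (hlR : l ∈ R) (hlS : l ∉ S) :
    wsgn (R, S) l * ssgn (R.erase l, insert l S) l = 1 := by
  have h1 := filt_erase_card (s := R) l hlR
  have h2 := filt_insert_card (s := S) l hlS
  rw [if_neg (lt_irrefl l), add_zero] at h1 h2
  unfold wsgn ssgn
  dsimp only
  rw [← pow_add, npow_parity _ 0 (by omega), pow_zero]

lemma diagS {R S : Finset ℕ} {k : ℕ} (hkS : k ∈ S) (hkR : k ∉ R) :
    ssgn (R, S) k * wsgn (insert k R, S.erase k) k = 1 := by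
  have h1 := filt_insert_card (s := R) k hkR
  have h2 := filt_erase_card (s := S) k hkS
  rw [if_neg (lt_irrefl k), add_zero] at h1 h2
  have h3 : (insert k R).erase k = R := Finset.erase_insert hkR
  unfold wsgn ssgn
  dsimp only
  rw [h3, ← pow_add, npow_parity _ 0 (by omega), pow_zero]

lemma cross_sign {R S : Finset ℕ} {l k : ℕ} (hlR : l ∈ R) (hlS : l ∉ S) (hkS : k ∈ S)
    (hkR : k ∉ R) :
    wsgn (R, S) l * ssgn (R.erase l, insert l S) k =
      ssgn (R, S) k * wsgn (insert k R, S.erase k) l := by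
  have hlk : l ≠ k := fun h => hkR (h ▸ hlR)
  have f1 := filt_erase_card (s := R) k hlR
  have f2 := filt_insert_card (s := S) k hlS
  have f3 := Finset.card_erase_add_one hlR
  have f4 := filt_insert_card (s := R) l hkR
  have f5 := filt_erase_card (s := S) l hkS
  have f6 : ((insert k R).erase l).card + 1 = R.card + 1 := by
    rw [Finset.card_erase_add_one (Finset.mem_insert_of_mem hlR),
      Finset.card_insert_of_notMem hkR]
  unfold wsgn ssgn
  dsimp only
  rw [← pow_add, ← pow_add]
  apply npow_parity
  rcases Nat.lt_or_ge l k with h | h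
  · have hkl : ¬ k < l := by omega
    rw [if_pos h] at f1 f2
    rw [if_neg hkl] at f4 f5
    omega
  · have hkl : k < l := by omega
    rw [if_neg (by omega : ¬ l < k)] at f1 f2
    rw [if_pos hkl] at f4 f5
    omega

end Part2
section Part3
open Finset

noncomputable def Hop : Fock →ₗ[ℂ] Fock := sigma ∘ₗ omega - omega ∘ₗ sigma

lemma charge_cast (R S : Finset ℕ) :
    (charge (R, S) : ℂ) = ((R \ S).card : ℂ) - ((S \ R).card : ℂ) := by
  have h1 : (R \ S).card + (R ∩ S).card = R.card := Finset.card_sdiff_add_card_inter R S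
  have h2 : (S \ R).card + (S ∩ R).card = S.card := Finset.card_sdiff_add_card_inter S R
  have h3 : (R ∩ S).card = (S ∩ R).card := by rw [Finset.inter_comm]
  have : charge (R, S) = ((R \ S).card : ℤ) - ((S \ R).card : ℤ) := by
    unfold charge; dsimp only; omega
  rw [this]; push_cast; ring

lemma Hop_single (x : FockIdx) : Hop (fsingle x) = (charge x : ℂ) • fsingle x := by
  obtain ⟨R, S⟩ := x
  have hA : sigma (omega (fsingle (R, S))) =
      (((R \ S).card : ℂ)) • fsingle (R, S) +
        ∑ l ∈ R \ S, ∑ k ∈ S \ R,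
          (wsgn (R, S) l * ssgn (R.erase l, insert l S) k) •
            fsingle (insert k (R.erase l), insert l (S.erase k)) := by
    rw [omega_single, map_sum]
    have hterm : ∀ l ∈ R \ S,
        sigma (wsgn (R, S) l • fsingle ((R, S).1.erase l, insert l (R, S).2)) =
          fsingle (R, S) + ∑ k ∈ S \ R,
            (wsgn (R, S) l * ssgn (R.erase l, insert l S) k) •
              fsingle (insert k (R.erase l), insert l (S.erase k)) := by
      intro l hl
      obtain ⟨hlR, hlS⟩ := Finset.mem_sdiff.mp hl
      rw [map_smul, sigma_single]
      dsimp only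
      have hidx : (insert l S) \ (R.erase l) = insert l (S \ R) := by
        ext a
        simp only [Finset.mem_sdiff, Finset.mem_insert, Finset.mem_erase]
        by_cases ha : a = l <;> simp [ha, hlR, hlS] <;> tauto
      rw [hidx, Finset.sum_insert (by simp [Finset.mem_sdiff, hlS]), smul_add, Finset.smul_sum]
      congr 1
      · rw [Finset.insert_erase hlR, Finset.erase_insert hlS, smul_smul, diagW hlR hlS, one_smul]
      · refine Finset.sum_congr rfl fun k hk => ?_
        obtain ⟨hkS, hkR⟩ := Finset.mem_sdiff.mp hk
        have hlk : l ≠ k := fun h => hkR (h ▸ hlR)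
        rw [smul_smul, Finset.erase_insert_of_ne hlk]
    rw [Finset.sum_congr rfl hterm, Finset.sum_add_distrib, Finset.sum_const,
      ← Nat.cast_smul_eq_nsmul ℂ]
  have hB : omega (sigma (fsingle (R, S))) =
      (((S \ R).card : ℂ)) • fsingle (R, S) +
        ∑ k ∈ S \ R, ∑ l ∈ R \ S,
          (ssgn (R, S) k * wsgn (insert k R, S.erase k) l) •
            fsingle ((insert k R).erase l, insert l (S.erase k)) := by
    rw [sigma_single, map_sum]
    have hterm : ∀ k ∈ S \ R,
        omega (ssgn (R, S) k • fsingle (insert k (R, S).1, (R, S).2.erase k)) =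
          fsingle (R, S) + ∑ l ∈ R \ S,
            (ssgn (R, S) k * wsgn (insert k R, S.erase k) l) •
              fsingle ((insert k R).erase l, insert l (S.erase k)) := by
      intro k hk
      obtain ⟨hkS, hkR⟩ := Finset.mem_sdiff.mp hk
      rw [map_smul, omega_single]
      dsimp only
      have hidx : (insert k R) \ (S.erase k) = insert k (R \ S) := by
        ext a
        simp only [Finset.mem_sdiff, Finset.mem_insert, Finset.mem_erase]
        by_cases ha : a = k <;> simp [ha, hkS, hkR] <;> tauto
      rw [hidx, Finset.sum_insert (by simp [Finset.mem_sdiff, hkR]), smul_add, Finset.smul_sum]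
      congr 1
      · rw [Finset.erase_insert hkR, Finset.insert_erase hkS, smul_smul, diagS hkS hkR, one_smul]
      · refine Finset.sum_congr rfl fun l hl => ?_
        rw [smul_smul]
    rw [Finset.sum_congr rfl hterm, Finset.sum_add_distrib, Finset.sum_const,
      ← Nat.cast_smul_eq_nsmul ℂ]
  have hcross : (∑ l ∈ R \ S, ∑ k ∈ S \ R,
          (wsgn (R, S) l * ssgn (R.erase l, insert l S) k) •
            fsingle (insert k (R.erase l), insert l (S.erase k))) =
      ∑ k ∈ S \ R, ∑ l ∈ R \ S,
          (ssgn (R, S) k * wsgn (insert k R, S.erase k) l) •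
            fsingle ((insert k R).erase l, insert l (S.erase k)) := by
    rw [Finset.sum_comm]
    refine Finset.sum_congr rfl fun k hk => Finset.sum_congr rfl fun l hl => ?_
    obtain ⟨hkS, hkR⟩ := Finset.mem_sdiff.mp hk
    obtain ⟨hlR, hlS⟩ := Finset.mem_sdiff.mp hl
    have hkl : k ≠ l := fun h => hlS (h ▸ hkS)
    rw [cross_sign hlR hlS hkS hkR, Finset.erase_insert_of_ne hkl]
  show (sigma ∘ₗ omega - omega ∘ₗ sigma) (fsingle (R, S)) = _
  rw [LinearMap.sub_apply, LinearMap.comp_apply, LinearMap.comp_apply, hA, hB, hcross,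
    add_sub_add_right_eq_sub, ← sub_smul, ← charge_cast]

end Part3
section Part4
open Finset

lemma charge_omega_tgt {R S : Finset ℕ} {k : ℕ} (hkR : k ∈ R) (hkS : k ∉ S) :
    charge (R.erase k, insert k S) = charge (R, S) - 2 := by
  have h1 := Finset.card_erase_add_one hkR
  have h2 := Finset.card_insert_of_notMem hkS
  unfold charge; dsimp only; omega

lemma charge_sigma_tgt {R S : Finset ℕ} {k : ℕ} (hkS : k ∈ S) (hkR : k ∉ R) :
    charge (insert k R, S.erase k) = charge (R, S) + 2 := by
  have h1 := Finset.card_erase_add_one hkS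
  have h2 := Finset.card_insert_of_notMem hkR
  unfold charge; dsimp only; omega

lemma single_eq_smul_fsingle (a : FockIdx) (b : ℂ) :
    (Finsupp.single a b : Fock) = b • fsingle a := by
  rw [fsingle, Finsupp.smul_single, smul_eq_mul, mul_one]

lemma Hop_omega_apply (v : Fock) :
    Hop (omega v) = omega (Hop v) - (2 : ℂ) • omega v := by
  have key : ∀ x : FockIdx, Hop (omega (fsingle x)) =
      omega (Hop (fsingle x)) - (2 : ℂ) • omega (fsingle x) := by
    intro x
    rw [Hop_single, map_smul, omega_single, map_sum, Finset.smul_sum, Finset.smul_sum,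
      ← Finset.sum_sub_distrib]
    refine Finset.sum_congr rfl fun k hk => ?_
    obtain ⟨hkR, hkS⟩ := Finset.mem_sdiff.mp hk
    rw [map_smul, Hop_single, smul_smul, smul_smul, smul_smul, ← sub_smul]
    congr 1
    have hc : ((charge (x.1.erase k, insert k x.2) : ℤ) : ℂ) = (charge x : ℂ) - 2 := by
      rw [charge_omega_tgt hkR hkS]; push_cast; norm_num
    rw [hc]; ring
  have : Hop ∘ₗ omega = omega ∘ₗ Hop - (2 : ℂ) • omega := by
    apply Finsupp.lhom_ext
    intro a b
    simp only [LinearMap.comp_apply, LinearMap.sub_apply, LinearMap.smul_apply,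
      single_eq_smul_fsingle, map_smul, key a, smul_sub]
    try rw [smul_comm b (2 : ℂ)]
  have h := LinearMap.congr_fun this v
  simpa only [LinearMap.comp_apply, LinearMap.sub_apply, LinearMap.smul_apply] using h

lemma Hop_sigma_apply (v : Fock) :
    Hop (sigma v) = sigma (Hop v) + (2 : ℂ) • sigma v := by
  have key : ∀ x : FockIdx, Hop (sigma (fsingle x)) =
      sigma (Hop (fsingle x)) + (2 : ℂ) • sigma (fsingle x) := by
    intro x
    rw [Hop_single, map_smul, sigma_single, map_sum, Finset.smul_sum, Finset.smul_sum,
      ← Finset.sum_add_distrib]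
    refine Finset.sum_congr rfl fun k hk => ?_
    obtain ⟨hkS, hkR⟩ := Finset.mem_sdiff.mp hk
    rw [map_smul, Hop_single, smul_smul, smul_smul, smul_smul, ← add_smul]
    congr 1
    have hc : ((charge (insert k x.1, x.2.erase k) : ℤ) : ℂ) = (charge x : ℂ) + 2 := by
      rw [charge_sigma_tgt hkS hkR]; push_cast; norm_num
    rw [hc]; ring
  have : Hop ∘ₗ sigma = sigma ∘ₗ Hop + (2 : ℂ) • sigma := by
    apply Finsupp.lhom_ext
    intro a b
    simp only [LinearMap.comp_apply, LinearMap.add_apply, LinearMap.smul_apply,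
      single_eq_smul_fsingle, map_smul, key a, smul_add]
    try rw [smul_comm b (2 : ℂ)]
  have h := LinearMap.congr_fun this v
  simpa only [LinearMap.comp_apply, LinearMap.add_apply, LinearMap.smul_apply] using h

lemma Hop_apply_coord (w : Fock) (y : FockIdx) : Hop w y = (charge y : ℂ) * w y := by
  have : (Finsupp.lapply y : Fock →ₗ[ℂ] ℂ).comp Hop = (charge y : ℂ) • (Finsupp.lapply y : Fock →ₗ[ℂ] ℂ) := by
    apply Finsupp.lhom_ext
    intro a b
    simp only [LinearMap.comp_apply, LinearMap.smul_apply, Finsupp.lapply_apply]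
    rw [single_eq_smul_fsingle, map_smul, Hop_single]
    simp only [Finsupp.smul_apply, fsingle, Finsupp.single_apply]
    by_cases h : a = y <;> simp [h] <;> ring
  have h := LinearMap.congr_fun this w
  simpa only [LinearMap.comp_apply, LinearMap.smul_apply, Finsupp.lapply_apply,
    smul_eq_mul] using h

lemma Hop_of_mem_FockC {c : ℤ} {v : Fock} (hv : v ∈ FockC c) : Hop v = (c : ℂ) • v := by
  ext y
  rw [Hop_apply_coord, Finsupp.smul_apply, smul_eq_mul]
  by_cases h : v y = 0
  · rw [h, mul_zero, mul_zero]
  · have : y ∈ {x : FockIdx | charge x = c} := by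
      rw [FockC, Finsupp.mem_supported] at hv
      exact hv (Finsupp.mem_support_iff.mpr h)
    rw [Set.mem_setOf_eq] at this
    rw [this]

lemma mem_FockC_of_Hop {c : ℤ} {v : Fock} (hv : Hop v = (c : ℂ) • v) : v ∈ FockC c := by
  rw [FockC, Finsupp.mem_supported]
  intro y hy
  rw [Finset.mem_coe, Finsupp.mem_support_iff] at hy
  have h := congrArg (fun w : Fock => w y) hv
  simp only [Hop_apply_coord, Finsupp.smul_apply, smul_eq_mul] at h
  have h2 : ((charge y : ℂ) - (c : ℂ)) * v y = 0 := by rw [sub_mul, h, sub_self]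
  rcases mul_eq_zero.mp h2 with h3 | h3
  · have h4 : (charge y : ℂ) = (c : ℂ) := sub_eq_zero.mp h3
    exact_mod_cast h4
  · exact absurd h3 hy

end Part4
section Part5
open Finset

def frameF (x : FockIdx) : Finset ℕ × Finset ℕ := (x.1 ∪ x.2, x.1 ∩ x.2)

lemma frame_omega_tgt {R S : Finset ℕ} {k : ℕ} (hkR : k ∈ R) (hkS : k ∉ S) :
    frameF (R.erase k, insert k S) = frameF (R, S) := by
  have h1 : (R.erase k) ∪ insert k S = R ∪ S := by
    ext a; by_cases ha : a = k <;>
      simp only [Finset.mem_union, Finset.mem_erase, Finset.mem_insert, ha] <;> tauto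
  have h2 : (R.erase k) ∩ insert k S = R ∩ S := by
    ext a; by_cases ha : a = k <;>
      simp only [Finset.mem_inter, Finset.mem_erase, Finset.mem_insert, ha] <;> tauto
  simp [frameF, h1, h2]

lemma frame_sigma_tgt {R S : Finset ℕ} {k : ℕ} (hkS : k ∈ S) (hkR : k ∉ R) :
    frameF (insert k R, S.erase k) = frameF (R, S) := by
  have h1 : (insert k R) ∪ S.erase k = R ∪ S := by
    ext a; by_cases ha : a = k <;>
      simp only [Finset.mem_union, Finset.mem_erase, Finset.mem_insert, ha] <;> tauto
  have h2 : (insert k R) ∩ S.erase k = R ∩ S := by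
    ext a; by_cases ha : a = k <;>
      simp only [Finset.mem_inter, Finset.mem_erase, Finset.mem_insert, ha] <;> tauto
  simp [frameF, h1, h2]

lemma frame_T_finite (Fr : Finset (Finset ℕ × Finset ℕ)) :
    Set.Finite {y : FockIdx | frameF y ∈ Fr} := by
  apply Set.Finite.subset (Finset.finite_toSet (Fr.biUnion fun f => f.1.powerset ×ˢ f.1.powerset))
  intro y hy
  rw [Set.mem_setOf_eq] at hy
  rw [Finset.coe_biUnion]
  refine Set.mem_biUnion hy ?_
  rw [Finset.coe_product]
  constructor
  · rw [Finset.mem_coe, Finset.mem_powerset]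
    exact fun a ha => Finset.mem_union_left _ ha
  · rw [Finset.mem_coe, Finset.mem_powerset]
    exact fun a ha => Finset.mem_union_right _ ha

lemma omega_mem_supported {T : Set FockIdx} (hT : ∀ y ∈ T, frameF y ∈ frameF '' T)
    (hT' : ∀ y z : FockIdx, y ∈ T → frameF z = frameF y → z ∈ T)
    (v : Fock) (hv : v ∈ Finsupp.supported ℂ ℂ T) :
    omega v ∈ Finsupp.supported ℂ ℂ T := by
  rw [Finsupp.supported_eq_span_single] at hv ⊢
  induction hv using Submodule.span_induction with
  | mem x hx =>
      obtain ⟨y, hy, rfl⟩ := hx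
      rw [show (fun i => Finsupp.single i (1:ℂ)) y = fsingle y from rfl, omega_single]
      refine Submodule.sum_mem _ fun k hk => Submodule.smul_mem _ _ (Submodule.subset_span ?_)
      obtain ⟨hkR, hkS⟩ := Finset.mem_sdiff.mp hk
      exact ⟨(y.1.erase k, insert k y.2), hT' y _ hy (frame_omega_tgt hkR hkS), rfl⟩
  | zero => simp
  | add x z _ _ hx hz => rw [map_add]; exact Submodule.add_mem _ hx hz
  | smul c x _ hx => rw [map_smul]; exact Submodule.smul_mem _ _ hx

lemma sigma_mem_supported {T : Set FockIdx} (hT : ∀ y ∈ T, frameF y ∈ frameF '' T)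
    (hT' : ∀ y z : FockIdx, y ∈ T → frameF z = frameF y → z ∈ T)
    (v : Fock) (hv : v ∈ Finsupp.supported ℂ ℂ T) :
    sigma v ∈ Finsupp.supported ℂ ℂ T := by
  rw [Finsupp.supported_eq_span_single] at hv ⊢
  induction hv using Submodule.span_induction with
  | mem x hx =>
      obtain ⟨y, hy, rfl⟩ := hx
      rw [show (fun i => Finsupp.single i (1:ℂ)) y = fsingle y from rfl, sigma_single]
      refine Submodule.sum_mem _ fun k hk => Submodule.smul_mem _ _ (Submodule.subset_span ?_)
      obtain ⟨hkS, hkR⟩ := Finset.mem_sdiff.mp hk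
      exact ⟨(insert k y.1, y.2.erase k), hT' y _ hy (frame_sigma_tgt hkS hkR), rfl⟩
  | zero => simp
  | add x z _ _ hx hz => rw [map_add]; exact Submodule.add_mem _ hx hz
  | smul c x _ hx => rw [map_smul]; exact Submodule.smul_mem _ _ hx

lemma restrict_pow_coe {f : Fock →ₗ[ℂ] Fock} {p : Submodule ℂ Fock}
    (hf : ∀ x ∈ p, f x ∈ p) (n : ℕ) (x : p) :
    (((f.restrict hf) ^ n) x : Fock) = (f ^ n) (x : Fock) := by
  induction n generalizing x with
  | zero => simp
  | succ n ih =>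
      rw [pow_succ, pow_succ, Module.End.mul_apply, Module.End.mul_apply, ih,
        LinearMap.restrict_apply]

end Part5
section Sl2
variable {V : Type} [AddCommGroup V] [Module ℂ V]

lemma pow_apply_succ (F : Module.End ℂ V) (j : ℕ) (w : V) :
    (F ^ (j + 1)) w = F ((F ^ j) w) := by
  rw [pow_succ', Module.End.mul_apply]

lemma eigen_indep (H : Module.End ℂ V) {ι : Type} (ev : ι → ℂ) :
    ∀ (s : Finset ι) (g : ι → V),
      (∀ i ∈ s, ∀ j ∈ s, ev i = ev j → i = j) →
      (∀ i ∈ s, H (g i) = ev i • g i) →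
      (∑ i ∈ s, g i) = 0 → ∀ i ∈ s, g i = 0 := by
  classical
  intro s
  induction s using Finset.induction_on with
  | empty => intro g _ _ _ i hi; exact absurd hi (Finset.notMem_empty i)
  | @insert a t ha ih =>
    intro g hinj heig hsum
    have hsum2 : ∑ i ∈ insert a t, (ev i - ev a) • g i = 0 := by
      have h1 : ∑ i ∈ insert a t, ev i • g i = 0 := by
        have h0 : H (∑ i ∈ insert a t, g i) = 0 := by rw [hsum, map_zero]
        rw [map_sum] at h0
        rw [← h0]
        exact Finset.sum_congr rfl fun i hi => (heig i hi).symm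
      calc ∑ i ∈ insert a t, (ev i - ev a) • g i
          = (∑ i ∈ insert a t, ev i • g i) - ev a • ∑ i ∈ insert a t, g i := by
            rw [Finset.smul_sum, ← Finset.sum_sub_distrib]
            exact Finset.sum_congr rfl fun i _ => by rw [sub_smul]
        _ = 0 := by rw [h1, hsum, smul_zero, sub_zero]
    rw [Finset.sum_insert ha, sub_self, zero_smul, zero_add] at hsum2
    have ht : ∀ i ∈ t, (ev i - ev a) • g i = 0 := by
      refine ih (fun i => (ev i - ev a) • g i) ?_ ?_ hsum2
      · intro i hi j hj hij
        exact hinj i (Finset.mem_insert_of_mem hi) j (Finset.mem_insert_of_mem hj) hij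
      · intro i hi
        rw [map_smul, heig i (Finset.mem_insert_of_mem hi), smul_comm]
    have hgz : ∀ i ∈ t, g i = 0 := by
      intro i hi
      rcases smul_eq_zero.mp (ht i hi) with h | h
      · exfalso
        have hia : i = a := hinj i (Finset.mem_insert_of_mem hi) a (Finset.mem_insert_self a t)
          (by rwa [sub_eq_zero] at h)
        exact ha (hia ▸ hi)
      · exact h
    intro i hi
    rcases Finset.mem_insert.mp hi with rfl | hi'
    · have h2 := hsum
      rw [Finset.sum_insert ha, Finset.sum_eq_zero hgz, add_zero] at h2
      exact h2
    · exact hgz i hi'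

lemma shift_nilpotent [Module.Finite ℂ V] (H A : Module.End ℂ V) (d : ℂ) (hd : d ≠ 0)
    (hshift : ∀ (u : V) (c : ℂ), H u = c • u → H (A u) = (c + d) • A u)
    (v : V) (c : ℂ) (hv : H v = c • v) : ∃ N, (A ^ N) v = 0 := by
  by_contra hcon
  push_neg at hcon
  have heig : ∀ n : ℕ, H ((A ^ n) v) = (c + n * d) • (A ^ n) v := by
    intro n
    induction n with
    | zero => simpa using hv
    | succ n ih =>
        have h2 : c + ((n : ℂ) + 1) * d = (c + n * d) + d := by ring
        rw [pow_apply_succ, hshift _ _ ih, ← h2]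
        push_cast
        ring_nf
  have hli : LinearIndependent ℂ (fun i : Fin (Module.finrank ℂ V + 1) => (A ^ (i : ℕ)) v) := by
    rw [linearIndependent_iff']
    intro s g hsum i hi
    have hval := eigen_indep H (fun i : Fin (Module.finrank ℂ V + 1) => c + (i : ℕ) * d) s
      (fun i => g i • (A ^ (i : ℕ)) v) ?_ ?_ hsum i hi
    · rcases smul_eq_zero.mp hval with h | h
      · exact h
      · exact absurd h (hcon _)
    · intro i _ j _ hij
      have h2 : ((i : ℕ) : ℂ) * d = ((j : ℕ) : ℂ) * d := by linear_combination hij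
      have h3 := mul_right_cancel₀ hd h2
      exact Fin.ext (Nat.cast_injective h3)
    · intro i _
      rw [map_smul, heig, smul_comm]
  have hcard := hli.fintype_card_le_finrank
  simp only [Fintype.card_fin] at hcard
  omega

lemma weight_E {E H : Module.End ℂ V} (hHE : H * E - E * H = (2:ℂ) • E)
    {v : V} {c : ℂ} (hv : H v = c • v) : H (E v) = (c + 2) • E v := by
  have h := LinearMap.congr_fun hHE v
  simp only [LinearMap.sub_apply, Module.End.mul_apply, LinearMap.smul_apply] at h
  have h2 : H (E v) = E (H v) + (2:ℂ) • E v := by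
    rw [← h]; abel
  rw [h2, hv, map_smul, add_smul]

lemma weight_F {F H : Module.End ℂ V} (hHF : H * F - F * H = -((2:ℂ) • F))
    {v : V} {c : ℂ} (hv : H v = c • v) : H (F v) = (c - 2) • F v := by
  have h := LinearMap.congr_fun hHF v
  simp only [LinearMap.sub_apply, Module.End.mul_apply, LinearMap.neg_apply,
    LinearMap.smul_apply] at h
  have h2 : H (F v) = F (H v) - (2:ℂ) • F v := by
    rw [sub_eq_iff_eq_add] at h
    rw [h]; abel
  rw [h2, hv, map_smul, sub_smul]

lemma weight_E_pow {E H : Module.End ℂ V} (hHE : H * E - E * H = (2:ℂ) • E)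
    {v : V} {c : ℂ} (hv : H v = c • v) (j : ℕ) :
    H ((E ^ j) v) = (c + 2 * j) • (E ^ j) v := by
  induction j with
  | zero => simpa using hv
  | succ j ih =>
      rw [pow_apply_succ, weight_E hHE ih]
      congr 1
      push_cast
      ring

lemma weight_F_pow {F H : Module.End ℂ V} (hHF : H * F - F * H = -((2:ℂ) • F))
    {v : V} {c : ℂ} (hv : H v = c • v) (j : ℕ) :
    H ((F ^ j) v) = (c - 2 * j) • (F ^ j) v := by
  induction j with
  | zero => simpa using hv
  | succ j ih =>
      rw [pow_apply_succ, weight_F hHF ih]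
      congr 1
      push_cast
      ring

lemma prim_rel {E F H : Module.End ℂ V} (hH : E * F - F * E = H)
    (hHF : H * F - F * H = -((2:ℂ) • F)) {w : V} {μ : ℂ}
    (hwE : E w = 0) (hwH : H w = μ • w) :
    ∀ j : ℕ, E ((F ^ (j + 1)) w) = (((j : ℂ) + 1) * (μ - j)) • (F ^ j) w := by
  intro j
  induction j with
  | zero =>
      have h := LinearMap.congr_fun hH w
      simp only [LinearMap.sub_apply, Module.End.mul_apply] at h
      have h2 : E (F w) = F (E w) + H w := by rw [← h]; abel
      rw [pow_one, h2, hwE, map_zero, zero_add, hwH, pow_zero, Module.End.one_apply]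
      norm_num
  | succ j ih =>
      have hw : H ((F ^ (j + 1)) w) = (μ - 2 * ((j : ℂ) + 1)) • (F ^ (j + 1)) w := by
        have := weight_F_pow hHF hwH (j + 1)
        rw [this]
        congr 1
        push_cast
        ring
      have h := LinearMap.congr_fun hH ((F ^ (j + 1)) w)
      simp only [LinearMap.sub_apply, Module.End.mul_apply] at h
      have hstep : E ((F ^ (j + 2)) w) = F (E ((F ^ (j + 1)) w)) + H ((F ^ (j + 1)) w) := by
        rw [pow_apply_succ F (j + 1) w, ← h]
        abel
      rw [hstep, ih, map_smul, hw, ← pow_apply_succ, ← add_smul]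
      congr 1
      push_cast
      ring

end Sl2
section Sl2Main

theorem sl2_main :
    ∀ (n : ℕ) (V : Type) [AddCommGroup V] [Module ℂ V] [Module.Finite ℂ V],
      Module.finrank ℂ V ≤ n →
      ∀ (E F H : Module.End ℂ V),
        E * F - F * E = H →
        H * E - E * H = (2:ℂ) • E →
        H * F - F * H = -((2:ℂ) • F) →
        (⨆ c : ℤ, LinearMap.ker (H - (c : ℂ) • (1 : Module.End ℂ V))) = ⊤ →
        ∀ m : ℕ,
          (∀ v : V, H v = (m : ℂ) • v → (F ^ m) v = 0 → v = 0) ∧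
          (∀ u : V, H u = -(m : ℂ) • u →
            ∃ v : V, H v = (m : ℂ) • v ∧ (F ^ m) v = u) := by
  intro n
  induction n with
  | zero =>
      intro V _ _ _ hrank E F H _ _ _ _ m
      have hzero : ∀ x : V, x = 0 := by
        have h0 : Module.finrank ℂ V = 0 := Nat.le_zero.mp hrank
        exact finrank_zero_iff_forall_zero.mp h0
      exact ⟨fun v _ _ => hzero v,
        fun u _ => ⟨0, by rw [map_zero, smul_zero], by rw [map_zero]; exact (hzero u).symm⟩⟩
  | succ n ih =>
      intro V _ _ _ hrank E F H hH hHE hHF hdiag m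
      classical
      by_cases htriv : ∀ x : V, x = 0
      · exact ⟨fun v _ _ => htriv v,
          fun u _ => ⟨0, by rw [map_zero, smul_zero], by rw [map_zero]; exact (htriv u).symm⟩⟩
      push_neg at htriv
      obtain ⟨x₀, hx₀⟩ := htriv
      -- find an eigenvector
      obtain ⟨c₀, v₀, hv₀ne, hv₀⟩ : ∃ (c : ℤ) (v : V), v ≠ 0 ∧ H v = (c : ℂ) • v := by
        by_contra hno
        push_neg at hno
        have hker : ∀ c : ℤ, LinearMap.ker (H - (c:ℂ) • (1 : Module.End ℂ V)) = ⊥ := by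
          intro c
          rw [eq_bot_iff]
          intro x hx
          rw [LinearMap.mem_ker, LinearMap.sub_apply, LinearMap.smul_apply,
            Module.End.one_apply, sub_eq_zero] at hx
          rw [Submodule.mem_bot]
          by_contra hxne
          exact (hno c x hxne) hx
        rw [show (⨆ c : ℤ, LinearMap.ker (H - (c:ℂ) • (1 : Module.End ℂ V))) = ⊥ from by
          simp [hker]] at hdiag
        have : x₀ ∈ (⊥ : Submodule ℂ V) := by rw [hdiag]; trivial
        exact hx₀ ((Submodule.mem_bot ℂ).mp this)
      -- primitive vector w
      have hEshift : ∀ (u : V) (c : ℂ), H u = c • u → H (E u) = (c + 2) • E u :=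
        fun u c hu => weight_E hHE hu
      have hFshift : ∀ (u : V) (c : ℂ), H u = c • u → H (F u) = (c + (-2)) • F u := by
        intro u c hu
        rw [show c + (-2:ℂ) = c - 2 by ring]
        exact weight_F hHF hu
      obtain ⟨N₁, hN₁⟩ := shift_nilpotent H E 2 two_ne_zero hEshift v₀ (c₀ : ℂ) hv₀
      have hPex : ∃ N, (E ^ N) v₀ = 0 := ⟨N₁, hN₁⟩
      have hNf0 : (E ^ Nat.find hPex) v₀ = 0 := Nat.find_spec hPex
      have hNfmin : ∀ t, t < Nat.find hPex → (E ^ t) v₀ ≠ 0 := fun t ht => Nat.find_min hPex ht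
      have hNfpos : Nat.find hPex ≠ 0 := by
        intro h
        apply hv₀ne
        simpa [h] using hNf0
      obtain ⟨k, hk⟩ : ∃ k, Nat.find hPex = k + 1 := ⟨Nat.find hPex - 1, by omega⟩
      set w := (E ^ k) v₀ with hwdef
      have hwne : w ≠ 0 := hNfmin k (by omega)
      have hwE : E w = 0 := by rw [hwdef, ← pow_apply_succ, ← hk]; exact hNf0
      have hwH : H w = ((c₀ : ℂ) + 2 * k) • w := weight_E_pow hHE hv₀ k
      -- F-nilpotency on w
      obtain ⟨N₂, hN₂⟩ := shift_nilpotent H F (-2) (by norm_num) hFshift w ((c₀ : ℂ) + 2 * k) hwH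
      have hQex : ∃ N, (F ^ N) w = 0 := ⟨N₂, hN₂⟩
      have hNg0 : (F ^ Nat.find hQex) w = 0 := Nat.find_spec hQex
      have hNgmin : ∀ t, t < Nat.find hQex → (F ^ t) w ≠ 0 := fun t ht => Nat.find_min hQex ht
      have hNgpos : Nat.find hQex ≠ 0 := by
        intro h
        apply hwne
        simpa [h] using hNg0
      obtain ⟨n₀, hn₀⟩ : ∃ n₀, Nat.find hQex = n₀ + 1 := ⟨Nat.find hQex - 1, by omega⟩
      -- the lowest weight is n₀
      have hμ : (c₀ : ℂ) + 2 * k = (n₀ : ℂ) := by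
        have h1 := prim_rel hH hHF hwE hwH n₀
        have h2 : (F ^ (n₀ + 1)) w = 0 := by rw [← hn₀]; exact hNg0
        rw [h2, map_zero] at h1
        have h3 : (F ^ n₀) w ≠ 0 := hNgmin n₀ (by omega)
        rcases smul_eq_zero.mp h1.symm with h | h
        · rcases mul_eq_zero.mp h with h4 | h4
          · exfalso
            exact Nat.cast_add_one_ne_zero n₀ (by push_cast; linear_combination h4)
          · rw [sub_eq_zero] at h4
            exact h4
        · exact absurd h h3
      have hwH' : H w = (n₀ : ℂ) • w := by rw [hwH, hμ]
      -- the chain u j = F^j w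
      set uu : ℕ → V := fun j => (F ^ j) w with huudef
      have huu_eig : ∀ j : ℕ, H (uu j) = ((n₀ : ℂ) - 2 * j) • uu j :=
        fun j => weight_F_pow hHF hwH' j
      have huu_ne : ∀ j ≤ n₀, uu j ≠ 0 := fun j hj => hNgmin j (by omega)
      have huu_top : uu (n₀ + 1) = 0 := by
        show (F ^ (n₀ + 1)) w = 0
        rw [← hn₀]; exact hNg0
      have huu_succ : ∀ j, F (uu j) = uu (j + 1) := fun j => (pow_apply_succ F j w).symm
      have huu_E : ∀ j : ℕ, E (uu (j + 1)) = (((j : ℂ) + 1) * ((n₀ : ℂ) - j)) • uu j :=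
        fun j => prim_rel hH hHF hwE hwH' j
      have huu_E0 : E (uu 0) = 0 := by
        show E ((F ^ 0) w) = 0
        rw [pow_zero, Module.End.one_apply]
        exact hwE
      have huu_shift : ∀ (i j : ℕ), (F ^ i) (uu j) = uu (j + i) := by
        intro i j
        show (F ^ i) ((F ^ j) w) = (F ^ (j + i)) w
        rw [← Module.End.mul_apply, ← pow_add, Nat.add_comm i j]
      -- the submodule M
      set M : Submodule ℂ V :=
        Submodule.span ℂ (Set.range fun j : Fin (n₀ + 1) => uu (j : ℕ)) with hMdef
      have huuM : ∀ j ≤ n₀, uu j ∈ M := fun j hj =>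
        Submodule.subset_span ⟨⟨j, by omega⟩, rfl⟩
      have hwM : w ∈ M := by
        have : uu 0 = w := by show (F ^ 0) w = w; rw [pow_zero, Module.End.one_apply]
        exact this ▸ huuM 0 (Nat.zero_le _)
      have hFM : ∀ x ∈ M, F x ∈ M := by
        intro x hx
        induction hx using Submodule.span_induction with
        | mem y hy =>
            obtain ⟨j, rfl⟩ := hy
            rw [huu_succ]
            by_cases hj : (j : ℕ) + 1 ≤ n₀
            · exact huuM _ hj
            · have hje : (j : ℕ) = n₀ := by have := j.isLt; omega
              rw [hje, huu_top]
              exact M.zero_mem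
        | zero => rw [map_zero]; exact M.zero_mem
        | add a b _ _ hfa hfb => rw [map_add]; exact M.add_mem hfa hfb
        | smul c a _ hfa => rw [map_smul]; exact M.smul_mem c hfa
      have hEM : ∀ x ∈ M, E x ∈ M := by
        intro x hx
        induction hx using Submodule.span_induction with
        | mem y hy =>
            obtain ⟨j, rfl⟩ := hy
            show E (uu (j : ℕ)) ∈ M
            have hjlt := j.isLt
            cases hj' : (j : ℕ) with
            | zero => rw [huu_E0]; exact M.zero_mem
            | succ j' =>
                rw [huu_E j']
                refine M.smul_mem _ (huuM _ ?_)
                omega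
        | zero => rw [map_zero]; exact M.zero_mem
        | add a b _ _ hfa hfb => rw [map_add]; exact M.add_mem hfa hfb
        | smul c a _ hfa => rw [map_smul]; exact M.smul_mem c hfa
      have hHM : ∀ x ∈ M, H x ∈ M := by
        intro x hx
        induction hx using Submodule.span_induction with
        | mem y hy =>
            obtain ⟨j, rfl⟩ := hy
            rw [huu_eig]
            exact M.smul_mem _ (huuM _ (by have := j.isLt; omega))
        | zero => rw [map_zero]; exact M.zero_mem
        | add a b _ _ hfa hfb => rw [map_add]; exact M.add_mem hfa hfb
        | smul c a _ hfa => rw [map_smul]; exact M.smul_mem c hfa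
      have hrep : ∀ x ∈ M, ∃ a : Fin (n₀ + 1) → ℂ,
          x = ∑ j : Fin (n₀ + 1), a j • uu (j : ℕ) := by
        intro x hx
        rw [hMdef, Submodule.mem_span_range_iff_exists_fun] at hx
        obtain ⟨a, ha⟩ := hx
        exact ⟨a, ha.symm⟩
      -- dichotomy for eigenvectors in M
      have hdich : ∀ (a : Fin (n₀ + 1) → ℂ) (c : ℂ),
          H (∑ j : Fin (n₀ + 1), a j • uu (j : ℕ)) =
            c • (∑ j : Fin (n₀ + 1), a j • uu (j : ℕ)) →
          ∀ j : Fin (n₀ + 1), a j • uu (j : ℕ) = 0 ∨ ((n₀ : ℂ) - 2 * (j : ℕ)) = c := by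
        intro a c hc j
        by_cases hz : a j • uu (j : ℕ) = 0
        · exact Or.inl hz
        refine Or.inr ?_
        have hsum : ∑ i : Fin (n₀ + 1),
            (((n₀ : ℂ) - 2 * (i : ℕ)) - c) • (a i • uu (i : ℕ)) = 0 := by
          have h1 : ∑ i : Fin (n₀ + 1), ((n₀ : ℂ) - 2 * (i : ℕ)) • (a i • uu (i : ℕ)) =
              H (∑ i : Fin (n₀ + 1), a i • uu (i : ℕ)) := by
            rw [map_sum]
            exact Finset.sum_congr rfl fun i _ => by rw [map_smul, huu_eig, smul_comm]
          calc ∑ i : Fin (n₀ + 1), (((n₀ : ℂ) - 2 * (i : ℕ)) - c) • (a i • uu (i : ℕ))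
              = (∑ i : Fin (n₀ + 1), ((n₀ : ℂ) - 2 * (i : ℕ)) • (a i • uu (i : ℕ))) -
                  c • ∑ i : Fin (n₀ + 1), a i • uu (i : ℕ) := by
                rw [Finset.smul_sum, ← Finset.sum_sub_distrib]
                exact Finset.sum_congr rfl fun i _ => by rw [sub_smul]
            _ = 0 := by rw [h1, hc, sub_self]
        have hval := eigen_indep H (fun i : Fin (n₀ + 1) => (n₀ : ℂ) - 2 * (i : ℕ))
          Finset.univ (fun i => (((n₀ : ℂ) - 2 * (i : ℕ)) - c) • (a i • uu (i : ℕ)))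
          (fun i _ j' _ hij => by
            have h2 : ((i : ℕ) : ℂ) = ((j' : ℕ) : ℂ) := by linear_combination -hij / 2
            exact Fin.ext (Nat.cast_injective h2))
          (fun i _ => by
            rw [map_smul, map_smul, huu_eig, smul_smul, smul_smul, smul_smul, smul_smul]
            congr 1
            ring)
          hsum j (Finset.mem_univ j)
        rcases smul_eq_zero.mp hval with h | h
        · rwa [sub_eq_zero] at h
        · exact absurd h hz
      -- injectivity on M
      have Minj : ∀ x ∈ M, H x = (m : ℂ) • x → (F ^ m) x = 0 → x = 0 := by
        intro x hxM hxH hxF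
        obtain ⟨a, rfl⟩ := hrep x hxM
        have hd := hdich a (m : ℂ) hxH
        have hFsum : ∑ j : Fin (n₀ + 1), a j • uu ((j : ℕ) + m) = 0 := by
          rw [← hxF, map_sum]
          exact Finset.sum_congr rfl fun j _ => by rw [map_smul, huu_shift]
        have hzero2 := eigen_indep H
          (fun j : Fin (n₀ + 1) => ((n₀ : ℂ) - 2 * m) - 2 * (j : ℕ))
          Finset.univ (fun j => a j • uu ((j : ℕ) + m))
          (fun i _ j' _ hij => by
            have h2 : ((i : ℕ) : ℂ) = ((j' : ℕ) : ℂ) := by linear_combination -hij / 2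
            exact Fin.ext (Nat.cast_injective h2))
          (fun i _ => by
            rw [map_smul, huu_eig, smul_comm]
            congr 1
            push_cast
            ring)
          hFsum
        have hterm : ∀ j : Fin (n₀ + 1), a j • uu (j : ℕ) = 0 := by
          intro j
          rcases hd j with h | h
          · exact h
          · have hnat : n₀ = 2 * (j : ℕ) + m := by
              have hcc : (n₀ : ℂ) = 2 * ((j : ℕ) : ℂ) + (m : ℂ) := by linear_combination h
              exact_mod_cast hcc
            by_contra hne
            have hane : a j ≠ 0 := fun h0 => hne (by rw [h0, zero_smul])
            have hune : uu ((j : ℕ) + m) ≠ 0 := huu_ne _ (by omega)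
            have h0 := hzero2 j (Finset.mem_univ j)
            rcases smul_eq_zero.mp h0 with h1 | h1
            · exact hane h1
            · exact hune h1
        exact Finset.sum_eq_zero fun j _ => hterm j
      -- surjectivity on M
      have Msurj : ∀ y ∈ M, H y = -(m : ℂ) • y →
          ∃ x : V, H x = (m : ℂ) • x ∧ (F ^ m) x = y := by
        intro y hyM hyH
        obtain ⟨b, rfl⟩ := hrep y hyM
        have hd := hdich b (-(m : ℂ)) hyH
        refine ⟨∑ j : Fin (n₀ + 1),
          if 2 * (j : ℕ) = n₀ + m then b j • uu ((j : ℕ) - m) else 0, ?_, ?_⟩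
        · rw [map_sum, Finset.smul_sum]
          refine Finset.sum_congr rfl fun j _ => ?_
          by_cases hj : 2 * (j : ℕ) = n₀ + m
          · rw [if_pos hj, map_smul, huu_eig, smul_comm]
            have hmj : m ≤ (j : ℕ) := by have := j.isLt; omega
            have hjc : 2 * ((j : ℕ) : ℂ) = (n₀ : ℂ) + (m : ℂ) := by exact_mod_cast hj
            have hsc : (n₀ : ℂ) - 2 * ((((j : ℕ) - m) : ℕ) : ℂ) = (m : ℂ) := by
              rw [Nat.cast_sub hmj]; linear_combination -hjc
            rw [hsc]
          · rw [if_neg hj, map_zero, smul_zero]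
        · rw [map_sum]
          refine Finset.sum_congr rfl fun j _ => ?_
          by_cases hj : 2 * (j : ℕ) = n₀ + m
          · rw [if_pos hj, map_smul, huu_shift]
            have hmj : m ≤ (j : ℕ) := by have := j.isLt; omega
            have : (j : ℕ) - m + m = (j : ℕ) := by omega
            rw [this]
          · rw [if_neg hj, map_zero]
            rcases hd j with h | h
            · exact h.symm
            · exfalso
              apply hj
              have hcc : 2 * ((j : ℕ) : ℂ) = (n₀ : ℂ) + (m : ℂ) := by linear_combination -h
              exact_mod_cast hcc
      -- the quotient
      have hEM' : M ≤ M.comap E := fun x hx => hEM x hx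
      have hFM' : M ≤ M.comap F := fun x hx => hFM x hx
      have hHM' : M ≤ M.comap H := fun x hx => hHM x hx
      set E' := M.mapQ M E hEM' with hE'def
      set F' := M.mapQ M F hFM' with hF'def
      set H' := M.mapQ M H hHM' with hH'def
      have hmkE : ∀ x : V, E' (M.mkQ x) = M.mkQ (E x) := fun x => by
        rw [hE'def, Submodule.mkQ_apply, Submodule.mapQ_apply, Submodule.mkQ_apply]
      have hmkF : ∀ x : V, F' (M.mkQ x) = M.mkQ (F x) := fun x => by
        rw [hF'def, Submodule.mkQ_apply, Submodule.mapQ_apply, Submodule.mkQ_apply]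
      have hmkH : ∀ x : V, H' (M.mkQ x) = M.mkQ (H x) := fun x => by
        rw [hH'def, Submodule.mkQ_apply, Submodule.mapQ_apply, Submodule.mkQ_apply]
      have rel1 : E' * F' - F' * E' = H' := by
        refine Submodule.linearMap_qext _ (LinearMap.ext fun x => ?_)
        simp only [LinearMap.comp_apply, LinearMap.sub_apply, Module.End.mul_apply,
          hmkE, hmkF, hmkH, ← map_sub]
        congr 1
        have h := LinearMap.congr_fun hH x
        simpa only [LinearMap.sub_apply, Module.End.mul_apply] using h
      have rel2 : H' * E' - E' * H' = (2:ℂ) • E' := by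
        refine Submodule.linearMap_qext _ (LinearMap.ext fun x => ?_)
        simp only [LinearMap.comp_apply, LinearMap.sub_apply, Module.End.mul_apply,
          LinearMap.smul_apply, hmkE, hmkH]
        have h := LinearMap.congr_fun hHE x
        simp only [LinearMap.sub_apply, Module.End.mul_apply, LinearMap.smul_apply] at h
        rw [← map_sub, h, map_smul]
      have rel3 : H' * F' - F' * H' = -((2:ℂ) • F') := by
        refine Submodule.linearMap_qext _ (LinearMap.ext fun x => ?_)
        simp only [LinearMap.comp_apply, LinearMap.sub_apply, Module.End.mul_apply,
          LinearMap.neg_apply, LinearMap.smul_apply, hmkF, hmkH]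
        have h := LinearMap.congr_fun hHF x
        simp only [LinearMap.sub_apply, Module.End.mul_apply, LinearMap.neg_apply,
          LinearMap.smul_apply] at h
        rw [← map_sub, h, map_neg, map_smul]
      have hdiagQ : (⨆ c : ℤ,
          LinearMap.ker (H' - (c : ℂ) • (1 : Module.End ℂ (V ⧸ M)))) = ⊤ := by
        rw [eq_top_iff]
        rintro z -
        obtain ⟨x, rfl⟩ := M.mkQ_surjective z
        have hx : x ∈ ⨆ c : ℤ, LinearMap.ker (H - (c:ℂ) • (1 : Module.End ℂ V)) := by
          rw [hdiag]; trivial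
        rw [Submodule.mem_iSup_iff_exists_finsupp] at hx
        obtain ⟨f, hf, hfsum⟩ := hx
        rw [← hfsum, show (f.sum fun _ xi => xi) = ∑ d ∈ f.support, f d from rfl, map_sum]
        refine Submodule.sum_mem _ fun c _ => ?_
        refine (le_iSup (fun c : ℤ =>
          LinearMap.ker (H' - (c : ℂ) • (1 : Module.End ℂ (V ⧸ M)))) c) ?_
        rw [LinearMap.mem_ker, LinearMap.sub_apply, LinearMap.smul_apply, Module.End.one_apply]
        have hfc := hf c
        rw [LinearMap.mem_ker, LinearMap.sub_apply, LinearMap.smul_apply,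
          Module.End.one_apply, sub_eq_zero] at hfc
        rw [hmkH, hfc, map_smul, sub_self]
      have hlift : ∀ (z : V ⧸ M) (c : ℤ), H' z = (c : ℂ) • z →
          ∃ x : V, H x = (c : ℂ) • x ∧ M.mkQ x = z := by
        intro z c hz
        obtain ⟨x₁, rfl⟩ := M.mkQ_surjective z
        have hx : x₁ ∈ ⨆ c : ℤ, LinearMap.ker (H - (c:ℂ) • (1 : Module.End ℂ V)) := by
          rw [hdiag]; trivial
        rw [Submodule.mem_iSup_iff_exists_finsupp] at hx
        obtain ⟨f, hf, hfsum⟩ := hx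
        have hfe : ∀ d : ℤ, H (f d) = (d : ℂ) • f d := by
          intro d
          have := hf d
          rwa [LinearMap.mem_ker, LinearMap.sub_apply, LinearMap.smul_apply,
            Module.End.one_apply, sub_eq_zero] at this
        have hmksum : ∑ d ∈ f.support, M.mkQ (f d) = M.mkQ x₁ := by
          rw [← hfsum, show (f.sum fun _ xi => xi) = ∑ d ∈ f.support, f d from rfl, map_sum]
        have hqe : ∀ d : ℤ, H' (M.mkQ (f d)) = (d : ℂ) • M.mkQ (f d) := by
          intro d
          rw [hmkH, hfe d, map_smul]
        have hsum0 : ∑ d ∈ f.support, (((d : ℂ) - (c : ℂ)) • M.mkQ (f d)) = 0 := by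
          have h1 : ∑ d ∈ f.support, (d : ℂ) • M.mkQ (f d) = H' (M.mkQ x₁) := by
            rw [← hmksum, map_sum]
            exact Finset.sum_congr rfl fun d _ => (hqe d).symm
          calc ∑ d ∈ f.support, ((d : ℂ) - (c : ℂ)) • M.mkQ (f d)
              = (∑ d ∈ f.support, (d : ℂ) • M.mkQ (f d)) -
                  (c : ℂ) • ∑ d ∈ f.support, M.mkQ (f d) := by
                rw [Finset.smul_sum, ← Finset.sum_sub_distrib]
                exact Finset.sum_congr rfl fun d _ => by rw [sub_smul]
            _ = 0 := by rw [h1, hmksum, hz, sub_self]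
        have hzz := eigen_indep H' (fun d : ℤ => (d : ℂ)) f.support
          (fun d => ((d : ℂ) - (c : ℂ)) • M.mkQ (f d))
          (fun i _ j _ hij => Int.cast_injective hij)
          (fun i _ => by rw [map_smul, hqe i, smul_comm])
          hsum0
        have hbz : ∀ b ∈ f.support, b ≠ c → M.mkQ (f b) = 0 := by
          intro b hb hbc
          have := hzz b hb
          rcases smul_eq_zero.mp this with h | h
          · exact absurd (by exact_mod_cast sub_eq_zero.mp h : b = c) hbc
          · exact h
        refine ⟨f c, hfe c, ?_⟩
        rw [← hmksum]
        by_cases hcs : c ∈ f.support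
        · exact (Finset.sum_eq_single_of_mem c hcs hbz).symm
        · have hfc0 : f c = 0 := Finsupp.notMem_support_iff.mp hcs
          rw [hfc0, map_zero]
          exact (Finset.sum_eq_zero fun b hb =>
            hbz b hb (fun hbc => hcs (hbc ▸ hb))).symm
      have hrankQ : Module.finrank ℂ (V ⧸ M) ≤ n := by
        have hq := Submodule.finrank_quotient_add_finrank M
        have hMpos : 0 < Module.finrank ℂ M := by
          rw [Module.finrank_pos_iff]
          exact nontrivial_of_ne (⟨w, hwM⟩ : M) 0
            (fun hh => hwne (by simpa [Subtype.ext_iff] using hh))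
        omega
      obtain ⟨Qinj, Qsurj⟩ := ih (V ⧸ M) hrankQ E' F' H' rel1 rel2 rel3 hdiagQ m
      have hpowQ : ∀ (j : ℕ) (x : V), (F' ^ j) (M.mkQ x) = M.mkQ ((F ^ j) x) := by
        intro j
        induction j with
        | zero => intro x; simp
        | succ j ihp =>
            intro x
            rw [pow_apply_succ, ihp, hmkF, ← pow_apply_succ]
      constructor
      · intro v hv hFv
        have h1 : H' (M.mkQ v) = (m : ℂ) • M.mkQ v := by rw [hmkH, hv, map_smul]
        have h2 : (F' ^ m) (M.mkQ v) = 0 := by rw [hpowQ, hFv, map_zero]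
        have h3 := Qinj (M.mkQ v) h1 h2
        have hvM : v ∈ M := by
          rwa [Submodule.mkQ_apply, Submodule.Quotient.mk_eq_zero] at h3
        exact Minj v hvM hv hFv
      · intro u hu
        have h1 : H' (M.mkQ u) = -(m : ℂ) • M.mkQ u := by rw [hmkH, hu, map_smul]
        obtain ⟨z, hz1, hz2⟩ := Qsurj (M.mkQ u) h1
        obtain ⟨v, hv1, hv2⟩ := hlift z (m : ℤ) (by
          rw [show (((m : ℤ) : ℂ)) = (m : ℂ) by push_cast; ring]
          exact hz1)
        rw [show (((m : ℤ) : ℂ)) = (m : ℂ) by push_cast; ring] at hv1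
        have hyM : (F ^ m) v - u ∈ M := by
          rw [← Submodule.Quotient.mk_eq_zero M, ← Submodule.mkQ_apply, map_sub, ← hpowQ,
            hv2, hz2, sub_self]
        have hyH : H ((F ^ m) v - u) = -(m : ℂ) • ((F ^ m) v - u) := by
          have hx2 := weight_F_pow hHF hv1 m
          rw [map_sub, hx2, hu, smul_sub]
          congr 2
          ring
        obtain ⟨x, hx1, hx2⟩ := Msurj _ hyM hyH
        refine ⟨v - x, ?_, ?_⟩
        · rw [map_sub, hv1, hx1, ← smul_sub]
        · rw [map_sub, hx2]
          abel

end Sl2Main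
section Assembly

lemma supported_module_finite {T : Set FockIdx} (hTfin : T.Finite) :
    FiniteDimensional ℂ (Finsupp.supported ℂ ℂ T) := by
  rw [Finsupp.supported_eq_span_single]
  exact FiniteDimensional.span_of_finite ℂ (hTfin.image _)

theorem omega_power_iso' (m : ℕ) :
    (∀ v ∈ FockC m, (omega ^ m) v = 0 → v = 0) ∧
    (∀ u ∈ FockC (-(m : ℤ)), ∃ v ∈ FockC m, (omega ^ m) v = u) := by
  classical
  -- a general construction: everything relative to a finite frame-closed support set
  have main : ∀ (v₀ : Fock),
      ∃ (T : Set FockIdx), v₀ ∈ Finsupp.supported ℂ ℂ T ∧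
        ∀ mm : ℕ,
          (∀ v ∈ Finsupp.supported ℂ ℂ T, Hop v = (mm : ℂ) • v → (omega ^ mm) v = 0 → v = 0) ∧
          (∀ u ∈ Finsupp.supported ℂ ℂ T, Hop u = -(mm : ℂ) • u →
            ∃ v ∈ Finsupp.supported ℂ ℂ T, Hop v = (mm : ℂ) • v ∧ (omega ^ mm) v = u) := by
    intro v₀
    set Fr : Finset (Finset ℕ × Finset ℕ) := v₀.support.image frameF with hFr
    set T : Set FockIdx := {y : FockIdx | frameF y ∈ Fr} with hT
    have hTfin : T.Finite := frame_T_finite Fr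
    have hT' : ∀ y z : FockIdx, y ∈ T → frameF z = frameF y → z ∈ T := by
      intro y z hy hz
      rw [hT, Set.mem_setOf_eq] at hy ⊢
      rw [hz]; exact hy
    have hTim : ∀ y ∈ T, frameF y ∈ frameF '' T := fun y hy => ⟨y, hy, rfl⟩
    refine ⟨T, ?_, ?_⟩
    · rw [Finsupp.mem_supported]
      intro y hy
      rw [Finset.mem_coe] at hy
      exact Finset.mem_image_of_mem frameF hy
    set W := Finsupp.supported ℂ ℂ T with hW
    haveI : FiniteDimensional ℂ W := supported_module_finite hTfin
    have hωW : ∀ x ∈ W, omega x ∈ W := fun x hx => omega_mem_supported hTim hT' x hx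
    have hσW : ∀ x ∈ W, sigma x ∈ W := fun x hx => sigma_mem_supported hTim hT' x hx
    set EW : Module.End ℂ W := sigma.restrict hσW with hEW
    set FW : Module.End ℂ W := omega.restrict hωW with hFW
    set HW : Module.End ℂ W := EW * FW - FW * EW with hHW
    have hHWcoe : ∀ x : W, (HW x : Fock) = Hop (x : Fock) := by
      intro x
      rw [hHW]
      simp only [LinearMap.sub_apply, Module.End.mul_apply, AddSubgroupClass.coe_sub,
        hEW, hFW, LinearMap.restrict_coe_apply]
      rw [Hop]
      simp only [LinearMap.sub_apply, LinearMap.comp_apply]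
    have relW2 : HW * EW - EW * HW = (2:ℂ) • EW := by
      refine LinearMap.ext fun x => Subtype.ext ?_
      simp only [LinearMap.sub_apply, Module.End.mul_apply, LinearMap.smul_apply,
        AddSubgroupClass.coe_sub, SetLike.val_smul, hHWcoe, hEW, hFW,
        LinearMap.restrict_coe_apply]
      rw [Hop_sigma_apply]
      abel
    have relW3 : HW * FW - FW * HW = -((2:ℂ) • FW) := by
      refine LinearMap.ext fun x => Subtype.ext ?_
      simp only [LinearMap.sub_apply, Module.End.mul_apply, LinearMap.smul_apply,
        LinearMap.neg_apply, AddSubgroupClass.coe_sub, SetLike.val_smul, NegMemClass.coe_neg,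
        hHWcoe, hEW, hFW, LinearMap.restrict_coe_apply]
      rw [Hop_omega_apply]
      abel
    have hdiagW : (⨆ c : ℤ, LinearMap.ker (HW - (c : ℂ) • (1 : Module.End ℂ W))) = ⊤ := by
      rw [eq_top_iff]
      rintro x -
      have hxsup : (((x : Fock)).support : Set FockIdx) ⊆ T := (Finsupp.mem_supported ℂ _).mp x.2
      have hxeq : x = ∑ y ∈ ((x : Fock)).support.attach,
          ((x : Fock) y.1) • (⟨fsingle y.1,
            Finsupp.single_mem_supported ℂ 1 (hxsup y.2)⟩ : W) := by
        apply Subtype.ext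
        rw [AddSubmonoidClass.coe_finset_sum]
        simp only [SetLike.val_smul]
        rw [Finset.sum_attach ((x : Fock)).support
          (fun y => ((x : Fock) y) • fsingle y)]
        conv_lhs => rw [← Finsupp.sum_single (x : Fock)]
        rw [Finsupp.sum]
        exact Finset.sum_congr rfl fun y _ => single_eq_smul_fsingle y _
      rw [hxeq]
      refine Submodule.sum_mem _ fun y _ => Submodule.smul_mem _ _ ?_
      refine (le_iSup (fun c : ℤ => LinearMap.ker (HW - (c : ℂ) • (1 : Module.End ℂ W)))
        (charge y.1)) ?_
      rw [LinearMap.mem_ker, LinearMap.sub_apply, LinearMap.smul_apply, Module.End.one_apply]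
      apply Subtype.ext
      rw [AddSubgroupClass.coe_sub, SetLike.val_smul, hHWcoe]
      simp only [Hop_single]
      rw [sub_self]
      simp
    have key := sl2_main (Module.finrank ℂ W) W le_rfl EW FW HW hHW.symm relW2 relW3 hdiagW
    intro mm
    obtain ⟨kinj, ksurj⟩ := key mm
    constructor
    · intro v hvW hvH hvF
      have h1 : HW ⟨v, hvW⟩ = (mm : ℂ) • ⟨v, hvW⟩ := by
        apply Subtype.ext
        rw [hHWcoe, SetLike.val_smul]
        exact hvH
      have h2 : (FW ^ mm) ⟨v, hvW⟩ = 0 := by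
        apply Subtype.ext
        rw [hFW, restrict_pow_coe]
        exact hvF
      have := kinj ⟨v, hvW⟩ h1 h2
      simpa [Subtype.ext_iff] using this
    · intro u huW huH
      have h1 : HW ⟨u, huW⟩ = -(mm : ℂ) • ⟨u, huW⟩ := by
        apply Subtype.ext
        rw [hHWcoe, SetLike.val_smul]
        exact huH
      obtain ⟨vv, hv1, hv2⟩ := ksurj ⟨u, huW⟩ h1
      refine ⟨(vv : Fock), vv.2, ?_, ?_⟩
      · have := congrArg (Subtype.val) hv1
        rw [hHWcoe, SetLike.val_smul] at this
        exact this
      · have := congrArg (Subtype.val) hv2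
        rw [hFW, restrict_pow_coe] at this
        exact this
  constructor
  · intro v hv h0
    obtain ⟨T, hvT, hprop⟩ := main v
    refine (hprop m).1 v hvT ?_ h0
    have := Hop_of_mem_FockC hv
    rw [this]
    norm_num
  · intro u hu
    obtain ⟨T, huT, hprop⟩ := main u
    have huH : Hop u = -(m : ℂ) • u := by
      have := Hop_of_mem_FockC hu
      rw [this]
      norm_num
    obtain ⟨v, hvT, hvH, hvF⟩ := (hprop m).2 u huT huH
    refine ⟨v, ?_, hvF⟩
    apply mem_FockC_of_Hop (c := (m : ℤ))
    rw [hvH]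
    norm_num

end Assembly
/-- `sl₂`-type lowering isomorphism between opposite-charge Fock
sectors: for every integer `m ≥ 0`, the `m`-th power `ω^m : F_m → F_{−m}` is a linear
isomorphism (stated as: injective on `F_m` and surjective onto `F_{−m}`; note
`ω^m(F_m) ⊆ F_{−m}`). -/
theorem omega_power_iso (m : ℕ) :
    (∀ v ∈ FockC m, (omega ^ m) v = 0 → v = 0) ∧
    (∀ u ∈ FockC (-(m : ℤ)), ∃ v ∈ FockC m, (omega ^ m) v = u) := by
  exact omega_power_iso' m

end
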